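/- There is a bijective correspondence between the set Pict((λ⁺)′/μ′, ν/ω) of pictures f : (λ⁺)′/μ′ → ν/ω and the set M((λ⁺)′/μ′, ν/ω) of marked tableaux. Under this correspondence, the marked tableau T⁺ corresponding to f has entry m+i at a cell x exactly when f(x) lies in row i of [ν/ω] (i.e. T⁺ is the row reading of f with entries shifted by m), and conversely f is the repositioning bijection Rpos : [(λ⁺)′/μ′] → [ν/ω] associated with T⁺, which sends the cell of the j-th occurrence of the symbol m+i in w(T⁺) to the cell (i, ωᵢ + j). -/
import Mathlib


noncomputable section

/-- A partition, written 1-based: `α i` is the length of row `i` for `i ≥ 1`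
(we normalize `α 0 = 0`); it is weakly decreasing and eventually zero. -/
def IsPartition (α : ℕ → ℕ) : Prop :=
  α 0 = 0 ∧ (∀ i j, 1 ≤ i → i ≤ j → α j ≤ α i) ∧ ∃ N, ∀ i, N ≤ i → α i = 0

/-- The set of cells of the skew diagram `α/β` (rows and columns 1-based):
`(i,j)` with `β i < j ≤ α i`. -/
def cellOf (α β : ℕ → ℕ) : Set (ℕ × ℕ) := {p | β p.1 < p.2 ∧ p.2 ≤ α p.1}

/-- The conjugate partition (1-based): `(conjP α) j = #{i ≥ 1 | α i ≥ j}` for `j ≥ 1`. -/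
def conjP (α : ℕ → ℕ) (j : ℕ) : ℕ := Set.ncard {i : ℕ | 1 ≤ i ∧ 1 ≤ j ∧ j ≤ α i}

/-- Semistandard skew tableau: entries weakly increase along rows (left to right) and
strictly increase down columns. -/
def IsSSkew (α β : ℕ → ℕ) (T : ℕ × ℕ → ℕ) : Prop :=
  (∀ i j j', (i, j) ∈ cellOf α β → (i, j') ∈ cellOf α β → j ≤ j' → T (i, j) ≤ T (i, j')) ∧
  (∀ i i' j, (i, j) ∈ cellOf α β → (i', j) ∈ cellOf α β → i < i' → T (i, j) < T (i', j))

/-- Anti-semistandard skew tableau: entries strictly decrease along rows (left to right)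
and weakly decrease down columns. -/
def IsAntiSSkew (α β : ℕ → ℕ) (T : ℕ × ℕ → ℕ) : Prop :=
  (∀ i j j', (i, j) ∈ cellOf α β → (i, j') ∈ cellOf α β → j < j' → T (i, j') < T (i, j)) ∧
  (∀ i i' j, (i, j) ∈ cellOf α β → (i', j) ∈ cellOf α β → i ≤ i' → T (i', j) ≤ T (i, j))

/-- `wle p q` : cell `p` comes weakly before cell `q` in the reading order of the reading
word (rows top to bottom, inside each row right to left). -/
def wle (p q : ℕ × ℕ) : Prop := p.1 < q.1 ∨ (p.1 = q.1 ∧ q.2 ≤ p.2)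

/-- Number of occurrences of the symbol `v` among the cells weakly before `x` in the
reading word of `T` (so "the `j`-th occurrence of `v` in `w(T)` is at the cell `x`" reads
`x ∈ cellOf α β ∧ T x = v ∧ occBefore α β T v x = j`). -/
def occBefore (α β : ℕ → ℕ) (T : ℕ × ℕ → ℕ) (v : ℕ) (x : ℕ × ℕ) : ℕ :=
  Set.ncard {p | p ∈ cellOf α β ∧ wle p x ∧ T p = v}

/-- Total number of occurrences of the symbol `v` in the skew tableau `T`. -/
def occCount (α β : ℕ → ℕ) (T : ℕ × ℕ → ℕ) (v : ℕ) : ℕ :=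
  Set.ncard {p | p ∈ cellOf α β ∧ T p = v}

/-- The reading word of `T` is a lattice word for the symbols `base, base+1, …` :
in every initial segment, `v+1` occurs at most as often as `v`, for every `v ≥ base`. -/
def IsLatticeFrom (α β : ℕ → ℕ) (T : ℕ × ℕ → ℕ) (base : ℕ) : Prop :=
  ∀ x ∈ cellOf α β, ∀ v, base ≤ v → occBefore α β T (v + 1) x ≤ occBefore α β T v x

/-- `T` (with symbols `m+1, m+2, …`) is shifted Yamanouchi with respect to the shift `ω`:
for every initial segment `w′` of the reading word and every `i ≥ 1`,
`ω i + a_i(w′) ≥ ω (i+1) + a_{i+1}(w′)`. -/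
def ShiftedYam (α β : ℕ → ℕ) (m : ℕ) (ω : ℕ → ℕ) (T : ℕ × ℕ → ℕ) : Prop :=
  ∀ x ∈ cellOf α β, ∀ i, 1 ≤ i →
    ω (i + 1) + occBefore α β T (m + i + 1) x ≤ ω i + occBefore α β T (m + i) x

/-- `Tm = Rp(Tp)` : if the `j`-th occurrence of the symbol `m+i` in the reading word of
`Tp` lies in column `c` of `Tp`, then the entry of `Tm` at the cell `(i, ω i + j)` is `c`. -/
def IsRp (α β : ℕ → ℕ) (m : ℕ) (ω : ℕ → ℕ) (Tp Tm : ℕ × ℕ → ℕ) : Prop :=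
  ∀ x ∈ cellOf α β, ∀ i, 1 ≤ i → Tp x = m + i →
    Tm (i, ω i + occBefore α β Tp (m + i) x) = x.2

/-- `λ⁺` : the first `m` rows of `λ`. -/
def lamPlus (m : ℕ) (la : ℕ → ℕ) : ℕ → ℕ := fun i => if i ≤ m then la i else 0

/-- `λ⁻` : the conjugate of the partition `(λ_{m+1}, λ_{m+2}, …)`. -/
def lamMinus (m : ℕ) (la : ℕ → ℕ) : ℕ → ℕ :=
  conjP (fun i => if 1 ≤ i then la (m + i) else 0)

/-- `p ≤_NW q`. -/
def leNW (p q : ℕ × ℕ) : Prop := p.1 ≤ q.1 ∧ p.2 ≤ q.2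

/-- `p ≤_SW q`. -/
def leSW (p q : ℕ × ℕ) : Prop := p.1 ≤ q.1 ∧ q.2 ≤ p.2

/-- A picture `f : α/β → γ/δ` : a bijection of the cell sets such that
`x ≤_NW y → f x ≤_SW f y` and `f x ≤_NW f y → x ≤_SW y`. -/
def IsPicture (α β γ δ : ℕ → ℕ) (f : ℕ × ℕ → ℕ × ℕ) : Prop :=
  Set.BijOn f (cellOf α β) (cellOf γ δ) ∧
    (∀ p ∈ cellOf α β, ∀ q ∈ cellOf α β, leNW p q → leSW (f p) (f q)) ∧
    (∀ p ∈ cellOf α β, ∀ q ∈ cellOf α β, leNW (f p) (f q) → leSW p q)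

/-- The repositioning map `Rpos` associated with a tableau `Tp` (symbols `m+1,…`):
the cell of the `j`-th occurrence of `m+i` in `w(Tp)` is sent to `(i, ω i + j)`. -/
def RposFun (α β : ℕ → ℕ) (m : ℕ) (ω : ℕ → ℕ) (Tp : ℕ × ℕ → ℕ) : ℕ × ℕ → ℕ × ℕ :=
  fun p => (Tp p - m, ω (Tp p - m) + occBefore α β Tp (Tp p) p)

section Infra

lemma mem_cellOf {α β : ℕ → ℕ} {p : ℕ × ℕ} :
    p ∈ cellOf α β ↔ β p.1 < p.2 ∧ p.2 ≤ α p.1 := Iff.rfl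

lemma wle_refl (p : ℕ × ℕ) : wle p p := Or.inr ⟨rfl, le_rfl⟩

lemma wle_trans {p q r : ℕ × ℕ} (h1 : wle p q) (h2 : wle q r) : wle p r := by
  unfold wle at *; omega

lemma wle_total (p q : ℕ × ℕ) : wle p q ∨ wle q p := by
  unfold wle; omega

lemma wle_antisymm {p q : ℕ × ℕ} (h1 : wle p q) (h2 : wle q p) : p = q := by
  unfold wle at *
  rw [Prod.ext_iff]
  exact ⟨by omega, by omega⟩

variable {α β : ℕ → ℕ} {T : ℕ × ℕ → ℕ}

lemma occSet_finite (hfin : (cellOf α β).Finite) (v : ℕ) (x : ℕ × ℕ) :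
    {p | p ∈ cellOf α β ∧ wle p x ∧ T p = v}.Finite :=
  hfin.subset fun _ hp => hp.1

lemma occBefore_mono (hfin : (cellOf α β).Finite) {v : ℕ} {x y : ℕ × ℕ} (hxy : wle x y) :
    occBefore α β T v x ≤ occBefore α β T v y := by
  apply Set.ncard_le_ncard ?_ (occSet_finite hfin v y)
  intro p hp
  exact ⟨hp.1, wle_trans hp.2.1 hxy, hp.2.2⟩

lemma occBefore_lt (hfin : (cellOf α β).Finite) {v : ℕ} {x y : ℕ × ℕ}
    (hx : x ∈ cellOf α β) (hy : y ∈ cellOf α β) (hTy : T y = v)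
    (hxy : wle x y) (hne : x ≠ y) :
    occBefore α β T v x < occBefore α β T v y := by
  apply Set.ncard_lt_ncard ?_ (occSet_finite hfin v y)
  constructor
  · intro p hp
    exact ⟨hp.1, wle_trans hp.2.1 hxy, hp.2.2⟩
  · intro hsub
    have hy' : y ∈ {p | p ∈ cellOf α β ∧ wle p y ∧ T p = v} := ⟨hy, wle_refl y, hTy⟩
    exact hne (wle_antisymm hxy (hsub hy').2.1)

lemma occBefore_pos (hfin : (cellOf α β).Finite) {v : ℕ} {x : ℕ × ℕ}
    (hx : x ∈ cellOf α β) (hTx : T x = v) : 1 ≤ occBefore α β T v x := by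
  have : ({p | p ∈ cellOf α β ∧ wle p x ∧ T p = v}).Nonempty := ⟨x, hx, wle_refl x, hTx⟩
  have h := (Set.ncard_pos (occSet_finite hfin v x)).2 this
  unfold occBefore
  omega

lemma occBefore_le_occCount (hfin : (cellOf α β).Finite) {v : ℕ} {x : ℕ × ℕ} :
    occBefore α β T v x ≤ occCount α β T v := by
  apply Set.ncard_le_ncard ?_ (hfin.subset fun _ hp => hp.1)
  intro p hp
  exact ⟨hp.1, hp.2.2⟩

lemma wle_of_occBefore_le (hfin : (cellOf α β).Finite) {v : ℕ} {x y : ℕ × ℕ}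
    (hx : x ∈ cellOf α β) (hy : y ∈ cellOf α β) (hTx : T x = v)
    (h : occBefore α β T v x ≤ occBefore α β T v y) : wle x y := by
  rcases wle_total x y with h' | h'
  · exact h'
  · by_cases hxy : y = x
    · rw [hxy]; exact wle_refl x
    · exact absurd (occBefore_lt hfin hy hx hTx h' hxy) (by omega)

lemma occBefore_rank_surj (hfin : (cellOf α β).Finite) (v k : ℕ)
    (hk1 : 1 ≤ k) (hk2 : k ≤ occCount α β T v) :
    ∃ x, x ∈ cellOf α β ∧ T x = v ∧ occBefore α β T v x = k := by
  classical
  set S := {p | p ∈ cellOf α β ∧ T p = v} with hS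
  have hSfin : S.Finite := hfin.subset fun _ hp => hp.1
  have hinj : Set.InjOn (occBefore α β T v) S := by
    intro x hx y hy hxy
    by_contra hne
    rcases wle_total x y with h' | h'
    · exact absurd hxy (Nat.ne_of_lt (occBefore_lt hfin hx.1 hy.1 hy.2 h' hne))
    · exact absurd hxy.symm (Nat.ne_of_lt (occBefore_lt hfin hy.1 hx.1 hx.2 h' (Ne.symm hne)))
  have himg : (occBefore α β T v) '' S ⊆ Set.Icc 1 (occCount α β T v) := by
    rintro _ ⟨x, hx, rfl⟩
    exact ⟨occBefore_pos hfin hx.1 hx.2, occBefore_le_occCount hfin⟩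
  have hcard : ((occBefore α β T v) '' S).ncard = occCount α β T v := by
    rw [Set.ncard_image_of_injOn hinj]; rfl
  have heq : (occBefore α β T v) '' S = Set.Icc 1 (occCount α β T v) := by
    apply Set.eq_of_subset_of_ncard_le himg ?_ (Set.finite_Icc _ _)
    rw [hcard, ← Finset.coe_Icc, Set.ncard_coe_finset, Nat.card_Icc]
    omega
  have hk : k ∈ (occBefore α β T v) '' S := by
    rw [heq]; exact ⟨hk1, hk2⟩
  obtain ⟨x, hx, hxk⟩ := hk
  exact ⟨x, hx.1, hx.2, hxk⟩

lemma ncard_Ioc (a b : ℕ) : (Set.Ioc a b).ncard = b - a := by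
  rw [← Finset.coe_Ioc, Set.ncard_coe_finset, Nat.card_Ioc]

lemma conjP_zero (h : ℕ → ℕ) : conjP h 0 = 0 := by
  unfold conjP
  convert Set.ncard_empty ℕ using 2
  ext i; simp

lemma conjP_anti (h : ℕ → ℕ) (N : ℕ) (hN : ∀ i, N ≤ i → h i = 0) {j j' : ℕ}
    (hj : 1 ≤ j) (hjj : j ≤ j') : conjP h j' ≤ conjP h j := by
  apply Set.ncard_le_ncard
  · rintro i ⟨h1, _, h3⟩
    exact ⟨h1, hj, le_trans hjj h3⟩
  · apply (Set.finite_Icc 1 N).subset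
    rintro i ⟨h1, h2, h3⟩
    refine ⟨h1, ?_⟩
    by_contra hc
    push_neg at hc
    have := hN i (le_of_lt hc)
    omega

lemma conjP_le (h : ℕ → ℕ) (M : ℕ) (hM : ∀ i, M < i → h i = 0) (j : ℕ) :
    conjP h j ≤ M := by
  have : conjP h j ≤ (Set.Icc 1 M).ncard := by
    apply Set.ncard_le_ncard ?_ (Set.finite_Icc 1 M)
    rintro i ⟨h1, h2, h3⟩
    refine ⟨h1, ?_⟩
    by_contra hc
    push_neg at hc
    have := hM i hc
    omega
  rw [← Finset.coe_Icc, Set.ncard_coe_finset, Nat.card_Icc] at this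
  omega

lemma conjP_pos_nonempty {h : ℕ → ℕ} {j : ℕ} (hp : 1 ≤ conjP h j) :
    ∃ i, 1 ≤ i ∧ j ≤ h i := by
  have : {i : ℕ | 1 ≤ i ∧ 1 ≤ j ∧ j ≤ h i}.Nonempty :=
    Set.nonempty_of_ncard_ne_zero (by unfold conjP at hp; omega)
  obtain ⟨i, h1, _, h3⟩ := this
  exact ⟨i, h1, h3⟩

end Infra
/-- pictures `f : (λ⁺)′/μ′ → ν/ω` correspond bijectively to marked
tableaux `T⁺ ∈ M((λ⁺)′/μ′, ν/ω)`: the row reading (shifted by `m`) of a picture is a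
marked tableau whose repositioning map is the picture itself; conversely the
repositioning map of a marked tableau is a picture whose row reading recovers the
tableau. -/
theorem statement17 (m n : ℕ) (hm : 1 ≤ m) (hn : 1 ≤ n) (la μ ν : ℕ → ℕ)
    (hla : IsPartition la) (hook : la (m + 1) ≤ n)
    (hμ : IsPartition μ) (hμl : ∀ i, μ i ≤ lamPlus m la i)
    (hν : IsPartition ν) (hνω : ∀ i, lamMinus m la i ≤ ν i)
    (hνn : ∀ i, n < i → ν i = lamMinus m la i) :
    (∀ f : ℕ × ℕ → ℕ × ℕ,
        IsPicture (conjP (lamPlus m la)) (conjP μ) ν (lamMinus m la) f →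
          (∀ p ∈ cellOf (conjP (lamPlus m la)) (conjP μ),
              m + 1 ≤ m + (f p).1 ∧ m + (f p).1 ≤ m + n) ∧
            (∀ i, 1 ≤ i →
              occCount (conjP (lamPlus m la)) (conjP μ) (fun q => m + (f q).1) (m + i) =
                ν i - lamMinus m la i) ∧
            IsSSkew (conjP (lamPlus m la)) (conjP μ) (fun q => m + (f q).1) ∧
            (∀ Tm : ℕ × ℕ → ℕ,
              IsRp (conjP (lamPlus m la)) (conjP μ) m (lamMinus m la)
                  (fun q => m + (f q).1) Tm →
                IsAntiSSkew ν (lamMinus m la) Tm) ∧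
            ∀ p ∈ cellOf (conjP (lamPlus m la)) (conjP μ),
              f p = RposFun (conjP (lamPlus m la)) (conjP μ) m (lamMinus m la)
                  (fun q => m + (f q).1) p) ∧
      ∀ Tp : ℕ × ℕ → ℕ,
        (∀ p ∈ cellOf (conjP (lamPlus m la)) (conjP μ), m + 1 ≤ Tp p ∧ Tp p ≤ m + n) →
        (∀ i, 1 ≤ i →
          occCount (conjP (lamPlus m la)) (conjP μ) Tp (m + i) = ν i - lamMinus m la i) →
        IsSSkew (conjP (lamPlus m la)) (conjP μ) Tp →
        (∀ Tm : ℕ × ℕ → ℕ,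
          IsRp (conjP (lamPlus m la)) (conjP μ) m (lamMinus m la) Tp Tm →
            IsAntiSSkew ν (lamMinus m la) Tm) →
        IsPicture (conjP (lamPlus m la)) (conjP μ) ν (lamMinus m la)
            (RposFun (conjP (lamPlus m la)) (conjP μ) m (lamMinus m la) Tp) ∧
          ∀ p ∈ cellOf (conjP (lamPlus m la)) (conjP μ),
            m + (RposFun (conjP (lamPlus m la)) (conjP μ) m (lamMinus m la) Tp p).1
              = Tp p := by
  classical
  obtain ⟨hla0, hlamono, Nla, hNla⟩ := hla
  obtain ⟨hμ0, hμmono, Nμ, hNμ⟩ := hμ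
  obtain ⟨hν0, hνmono, -⟩ := hν
  set A := conjP (lamPlus m la) with hAdef
  set B := conjP μ with hBdef
  set W := lamMinus m la with hWdef
  have hlamPlus0 : ∀ i, m < i → lamPlus m la i = 0 := fun i hi => if_neg (by omega)
  have hlamPlusEv : ∀ i, m + 1 ≤ i → lamPlus m la i = 0 := fun i hi => if_neg (by omega)
  have hAanti : ∀ j j', 1 ≤ j → j ≤ j' → A j' ≤ A j := fun j j' h1 h2 =>
    conjP_anti _ (m + 1) hlamPlusEv h1 h2
  have hBanti : ∀ j j', 1 ≤ j → j ≤ j' → B j' ≤ B j := fun j j' h1 h2 =>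
    conjP_anti _ Nμ hNμ h1 h2
  have hWanti : ∀ j j', 1 ≤ j → j ≤ j' → W j' ≤ W j := by
    intro j j' h1 h2
    rw [hWdef]
    unfold lamMinus
    refine conjP_anti _ Nla ?_ h1 h2
    intro i hi
    split
    · exact hNla (m + i) (by omega)
    · rfl
  have hA0 : A 0 = 0 := conjP_zero _
  have hB0 : B 0 = 0 := conjP_zero _
  have hcellA : ∀ p : ℕ × ℕ, p ∈ cellOf A B → 1 ≤ p.1 ∧ p.1 ≤ la 1 ∧ 1 ≤ p.2 ∧ p.2 ≤ m := by
    intro p hp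
    obtain ⟨hp1, hp2⟩ := mem_cellOf.mp hp
    have hc2 : 1 ≤ p.2 := by omega
    have hr1 : 1 ≤ p.1 := by
      by_contra hc
      push_neg at hc
      have h0 : p.1 = 0 := by omega
      rw [h0, hA0] at hp2
      omega
    have hcm : p.2 ≤ m := le_trans hp2 (conjP_le _ m hlamPlus0 p.1)
    have hrla : p.1 ≤ la 1 := by
      have hpos : 1 ≤ A p.1 := by omega
      obtain ⟨i, hi1, hile⟩ := conjP_pos_nonempty hpos
      have hle1 : lamPlus m la i ≤ la i := by
        unfold lamPlus
        split <;> omega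
      have hle2 : la i ≤ la 1 := hlamono 1 i le_rfl hi1
      omega
    exact ⟨hr1, hrla, hc2, hcm⟩
  have hfinA : (cellOf A B).Finite := by
    apply ((Set.finite_Icc 1 (la 1)).prod (Set.finite_Icc 1 m)).subset
    intro p hp
    have h := hcellA p hp
    exact ⟨⟨h.1, h.2.1⟩, h.2.2.1, h.2.2.2⟩
  have hcellN : ∀ p : ℕ × ℕ, p ∈ cellOf ν W → 1 ≤ p.1 ∧ p.1 ≤ n := by
    intro p hp
    obtain ⟨hp1, hp2⟩ := mem_cellOf.mp hp
    have hr1 : 1 ≤ p.1 := by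
      by_contra hc
      push_neg at hc
      have h0 : p.1 = 0 := by omega
      rw [h0, hν0] at hp2
      omega
    refine ⟨hr1, ?_⟩
    by_contra hc
    push_neg at hc
    have := hνn p.1 hc
    omega
  have hνW : ∀ i, W i ≤ ν i := hνω
  have heta : ∀ p : ℕ × ℕ, (p.1, p.2) = p := fun p => rfl
  constructor
  · -- Part 1 : pictures give marked tableaux
    rintro f ⟨hbij, hp1, hp2⟩
    have hfmem : ∀ p ∈ cellOf A B, f p ∈ cellOf ν W := fun p hp => hbij.1 hp
    have hrow1 : ∀ p ∈ cellOf A B, 1 ≤ (f p).1 ∧ (f p).1 ≤ n :=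
      fun p hp => hcellN (f p) (hfmem p hp)
    have hfne : ∀ p ∈ cellOf A B, ∀ q ∈ cellOf A B, p ≠ q → f p ≠ f q := by
      intro p hp q hq hne h
      exact hne (hbij.2.1 hp hq h)
    have hfiber : ∀ p ∈ cellOf A B, ∀ q ∈ cellOf A B, (f p).1 = (f q).1 → wle p q → p ≠ q →
        (f p).2 < (f q).2 := by
      intro p hp q hq hrow hwle hne
      rcases hwle with hlt | ⟨heq, hle⟩
      · by_contra hc
        push_neg at hc
        have hsw := hp2 q hq p hp ⟨hrow.ge, hc⟩
        have := hsw.1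
        omega
      · have hsw := hp1 q hq p hp ⟨heq.ge, hle⟩
        refine lt_of_le_of_ne hsw.2 ?_
        intro h
        exact hfne p hp q hq hne (Prod.ext hrow h)
    have hocc : ∀ p ∈ cellOf A B,
        occBefore A B (fun q => m + (f q).1) (m + (f p).1) p = (f p).2 - W ((f p).1) := by
      intro p hp
      have hfp := mem_cellOf.mp (hfmem p hp)
      set S := {q | q ∈ cellOf A B ∧ wle q p ∧ (fun q => m + (f q).1) q = m + (f p).1}
        with hSdef
      have hmemS : ∀ q, q ∈ S ↔ q ∈ cellOf A B ∧ wle q p ∧ (f q).1 = (f p).1 := by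
        intro q
        simp only [hSdef, Set.mem_setOf_eq]
        constructor
        · rintro ⟨h1, h2, h3⟩
          exact ⟨h1, h2, by omega⟩
        · rintro ⟨h1, h2, h3⟩
          exact ⟨h1, h2, by omega⟩
      have hinjS : Set.InjOn (fun q => (f q).2) S := by
        intro q hq q' hq' he
        obtain ⟨hq1, _, hq3⟩ := (hmemS q).1 hq
        obtain ⟨hq1', _, hq3'⟩ := (hmemS q').1 hq'
        exact hbij.2.1 hq1 hq1' (Prod.ext (hq3.trans hq3'.symm) he)
      have himg : (fun q => (f q).2) '' S = Set.Ioc (W ((f p).1)) ((f p).2) := by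
        apply Set.Subset.antisymm
        · rintro _ ⟨q, hq, rfl⟩
          obtain ⟨hq1, hq2, hq3⟩ := (hmemS q).1 hq
          rw [Set.mem_Ioc]
          have hmq := mem_cellOf.mp (hfmem q hq1)
          rw [hq3] at hmq
          refine ⟨hmq.1, ?_⟩
          by_cases hqp : q = p
          · rw [hqp]
          · exact (hfiber q hq1 p hp hq3 hq2 hqp).le
        · intro c hc
          rw [Set.mem_Ioc] at hc
          have hicN : ((f p).1, c) ∈ cellOf ν W :=
            mem_cellOf.mpr ⟨hc.1, le_trans hc.2 hfp.2⟩
          obtain ⟨q, hq, hfq⟩ := hbij.2.2 hicN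
          have hq3 : (f q).1 = (f p).1 := by rw [hfq]
          have hq2c : (f q).2 = c := by rw [hfq]
          refine ⟨q, (hmemS q).2 ⟨hq, ?_, hq3⟩, hq2c⟩
          rcases wle_total q p with h | h
          · exact h
          · by_cases hqp : q = p
            · rw [hqp]
              exact wle_refl p
            · have hlt := hfiber p hp q hq hq3.symm h (Ne.symm hqp)
              have := hc.2
              omega
      show S.ncard = (f p).2 - W ((f p).1)
      rw [← Set.ncard_image_of_injOn hinjS, himg, ncard_Ioc]
    have hRpos : ∀ p ∈ cellOf A B,
        f p = RposFun A B m W (fun q => m + (f q).1) p := by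
      intro p hp
      have h1 := (hrow1 p hp).1
      have h2 : W (f p).1 < (f p).2 := (mem_cellOf.mp (hfmem p hp)).1
      have hsub : m + (f p).1 - m = (f p).1 := by omega
      show f p = (m + (f p).1 - m,
        W (m + (f p).1 - m) + occBefore A B (fun q => m + (f q).1) (m + (f p).1) p)
      rw [hsub, hocc p hp]
      refine Prod.ext rfl ?_
      show (f p).2 = W (f p).1 + ((f p).2 - W (f p).1)
      omega
    refine ⟨?_, ?_, ?_, ?_, hRpos⟩
    · intro p hp
      have := hrow1 p hp
      omega
    · intro i hi
      set S := {q | q ∈ cellOf A B ∧ (fun q => m + (f q).1) q = m + i} with hSdef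
      have hmemS : ∀ q, q ∈ S ↔ q ∈ cellOf A B ∧ (f q).1 = i := by
        intro q
        simp only [hSdef, Set.mem_setOf_eq]
        constructor
        · rintro ⟨h1, h2⟩
          exact ⟨h1, by omega⟩
        · rintro ⟨h1, h2⟩
          exact ⟨h1, by omega⟩
      have hinjS : Set.InjOn (fun q => (f q).2) S := by
        intro q hq q' hq' he
        obtain ⟨h1, h2⟩ := (hmemS q).1 hq
        obtain ⟨h1', h2'⟩ := (hmemS q').1 hq'
        exact hbij.2.1 h1 h1' (Prod.ext (h2.trans h2'.symm) he)
      have himg : (fun q => (f q).2) '' S = Set.Ioc (W i) (ν i) := by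
        apply Set.Subset.antisymm
        · rintro _ ⟨q, hq, rfl⟩
          obtain ⟨h1, h2⟩ := (hmemS q).1 hq
          have hmq := mem_cellOf.mp (hfmem q h1)
          rw [h2] at hmq
          rw [Set.mem_Ioc]
          exact hmq
        · intro c hc
          rw [Set.mem_Ioc] at hc
          have hicN : (i, c) ∈ cellOf ν W := mem_cellOf.mpr ⟨hc.1, hc.2⟩
          obtain ⟨q, hq, hfq⟩ := hbij.2.2 hicN
          refine ⟨q, (hmemS q).2 ⟨hq, by rw [hfq]⟩, by show (f q).2 = c; rw [hfq]⟩
      show S.ncard = ν i - W i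
      rw [← Set.ncard_image_of_injOn hinjS, himg, ncard_Ioc]
    · constructor
      · intro r j j' hj hj' hjj
        have hsw := hp1 (r, j) hj (r, j') hj' ⟨le_rfl, hjj⟩
        have := hsw.1
        show m + (f (r, j)).1 ≤ m + (f (r, j')).1
        omega
      · intro r r' j hj hj' hrr
        have hsw := hp1 (r, j) hj (r', j) hj' ⟨hrr.le, le_rfl⟩
        show m + (f (r, j)).1 < m + (f (r', j)).1
        rcases lt_or_eq_of_le hsw.1 with h | h
        · omega
        · exfalso
          have hne : (r, j) ≠ (r', j) := by
            intro he
            have : r = r' := congrArg Prod.fst he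
            omega
          have hlt := hfiber (r, j) hj (r', j) hj' h (Or.inl hrr) hne
          have := hsw.2
          omega
    · intro Tm hTm
      have hTmEq : ∀ x ∈ cellOf A B, Tm (f x) = x.2 := by
        intro x hx
        have h1 := (hrow1 x hx).1
        have h2 : W (f x).1 < (f x).2 := (mem_cellOf.mp (hfmem x hx)).1
        have e : ((f x).1, W ((f x).1) + occBefore A B (fun q => m + (f q).1)
            (m + (f x).1) x) = f x := by
          rw [hocc x hx]
          refine Prod.ext rfl ?_
          show W (f x).1 + ((f x).2 - W (f x).1) = (f x).2
          omega
        have h := hTm x hx (f x).1 h1 rfl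
        rw [e] at h
        exact h
      constructor
      · intro i j j' hc hc' hjj
        obtain ⟨x, hx, hfx⟩ := hbij.2.2 hc
        obtain ⟨x', hx', hfx'⟩ := hbij.2.2 hc'
        rw [← hfx, ← hfx', hTmEq x hx, hTmEq x' hx']
        have hsw := hp2 x hx x' hx' (by rw [hfx, hfx']; exact ⟨le_rfl, hjj.le⟩)
        refine lt_of_le_of_ne hsw.2 ?_
        intro he
        have hsw2 := hp1 x hx x' hx' ⟨hsw.1, he.ge⟩
        rw [hfx, hfx'] at hsw2
        have h1 : j' ≤ j := hsw2.2
        omega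
      · intro i i' j hc hc' hii
        obtain ⟨x, hx, hfx⟩ := hbij.2.2 hc
        obtain ⟨x', hx', hfx'⟩ := hbij.2.2 hc'
        rw [← hfx, ← hfx', hTmEq x hx, hTmEq x' hx']
        exact (hp2 x hx x' hx' (by rw [hfx, hfx']; exact ⟨hii, le_rfl⟩)).2
  · -- Part 2 : marked tableaux give pictures
    intro Tp hbd hcnt hss hmark
    set g := RposFun A B m W Tp with hgdef
    have hgi : ∀ p, g p = (Tp p - m, W (Tp p - m) + occBefore A B Tp (Tp p) p) :=
      fun p => rfl
    have hex : ∀ p ∈ cellOf A B, ∃ i, 1 ≤ i ∧ i ≤ n ∧ Tp p = m + i := by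
      intro p hp
      have := hbd p hp
      exact ⟨Tp p - m, by omega, by omega, by omega⟩
    have hgp' : ∀ p ∈ cellOf A B, ∀ i, Tp p = m + i →
        g p = (i, W i + occBefore A B Tp (m + i) p) := by
      intro p hp i hTp
      rw [hgi, hTp, Nat.add_sub_cancel_left]
    have hocc1 : ∀ p ∈ cellOf A B, ∀ i, Tp p = m + i → 1 ≤ occBefore A B Tp (m + i) p :=
      fun p hp i hTp => occBefore_pos hfinA hp hTp
    have hoccle : ∀ p ∈ cellOf A B, ∀ i, 1 ≤ i → Tp p = m + i →
        occBefore A B Tp (m + i) p ≤ ν i - W i := by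
      intro p hp i hi hTp
      have h := occBefore_le_occCount (T := Tp) (v := m + i) (x := p) hfinA
      rw [hcnt i hi] at h
      exact h
    have hmaps : ∀ p ∈ cellOf A B, g p ∈ cellOf ν W := by
      intro p hp
      obtain ⟨i, hi1, hin, hTp⟩ := hex p hp
      rw [hgp' p hp i hTp]
      refine mem_cellOf.mpr ⟨?_, ?_⟩
      · show W i < W i + occBefore A B Tp (m + i) p
        have := hocc1 p hp i hTp
        omega
      · show W i + occBefore A B Tp (m + i) p ≤ ν i
        have h1 := hoccle p hp i hi1 hTp
        have h2 := hνW i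
        omega
    have hinj : Set.InjOn g (cellOf A B) := by
      intro p hp q hq he
      obtain ⟨i, hi1, -, hTp⟩ := hex p hp
      obtain ⟨i', hi1', -, hTq⟩ := hex q hq
      rw [hgp' p hp i hTp, hgp' q hq i' hTq, Prod.mk.injEq] at he
      obtain ⟨he1, he2⟩ := he
      subst he1
      have hTpq : Tp q = m + i := hTq
      by_contra hne
      rcases wle_total p q with h | h
      · have := occBefore_lt hfinA hp hq hTpq h hne
        omega
      · have := occBefore_lt hfinA hq hp hTp h (Ne.symm hne)
        omega
    have hcell_g : ∀ i c, (i, c) ∈ cellOf ν W →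
        ∃ x, x ∈ cellOf A B ∧ Tp x = m + i ∧ g x = (i, c) := by
      intro i c hy
      have hw : W i < c := hy.1
      have hv : c ≤ ν i := hy.2
      have h1 : 1 ≤ i := (hcellN (i, c) hy).1
      obtain ⟨x, hx, hTx, hoccx⟩ := occBefore_rank_surj (T := Tp) hfinA (m + i) (c - W i)
        (by omega) (by rw [hcnt i h1]; omega)
      refine ⟨x, hx, hTx, ?_⟩
      rw [hgp' x hx i hTx, hoccx]
      have hcc : W i + (c - W i) = c := by omega
      rw [hcc]
    have hsurj : Set.SurjOn g (cellOf A B) (cellOf ν W) := by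
      intro y hy
      obtain ⟨x, hx, -, hgx⟩ := hcell_g y.1 y.2 (by rw [heta]; exact hy)
      refine ⟨x, hx, ?_⟩
      rw [hgx]
    have hTmEx : ∃ Tm : ℕ × ℕ → ℕ, ∀ x ∈ cellOf A B, Tm (g x) = x.2 := by
      refine ⟨fun y => if h : ∃ x, x ∈ cellOf A B ∧ g x = y then h.choose.2 else 0, ?_⟩
      intro x hx
      have hex' : ∃ z, z ∈ cellOf A B ∧ g z = g x := ⟨x, hx, rfl⟩
      simp only [dif_pos hex']
      obtain ⟨hz1, hz2⟩ := hex'.choose_spec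
      rw [hinj hz1 hx hz2]
    obtain ⟨Tm, hTmg⟩ := hTmEx
    have hIsRp : IsRp A B m W Tp Tm := by
      intro x hx i hi hTx
      rw [← hgp' x hx i hTx]
      exact hTmg x hx
    have hanti := hmark Tm hIsRp
    have hab : ∀ p ∈ cellOf A B, ∀ q ∈ cellOf A B, leNW p q → Tp p ≤ Tp q := by
      intro p hp q hq hnw
      have hpc := mem_cellOf.mp hp
      have hqc := mem_cellOf.mp hq
      by_cases hr : p.1 = q.1
      · have h := hss.1 p.1 p.2 q.2 (by rw [heta]; exact hp)
          (by rw [hr, heta]; exact hq) hnw.2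
        rw [heta p, hr, heta q] at h
        exact h
      · have hr' : p.1 < q.1 := lt_of_le_of_ne hnw.1 hr
        have h1p := (hcellA p hp).1
        have hmid : (q.1, p.2) ∈ cellOf A B := by
          refine mem_cellOf.mpr ⟨?_, ?_⟩
          · show B q.1 < p.2
            have hBle := hBanti p.1 q.1 h1p hnw.1
            have := hpc.1
            omega
          · show p.2 ≤ A q.1
            have := hqc.2
            have := hnw.2
            omega
        have h1 := hss.2 p.1 q.1 p.2 (by rw [heta]; exact hp) hmid hr'
        have h2 := hss.1 q.1 p.2 q.2 hmid (by rw [heta]; exact hq) hnw.2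
        rw [heta p] at h1
        rw [heta q] at h2
        omega
    have hNE : ∀ p ∈ cellOf A B, ∀ y ∈ cellOf A B, y.1 < p.1 → y.2 ≤ p.2 →
        Tp y < Tp p := by
      intro p hp y hy h1 h2
      have hyc := mem_cellOf.mp hy
      have hpc := mem_cellOf.mp hp
      have hy1 := (hcellA y hy).1
      have hmid : (p.1, y.2) ∈ cellOf A B := by
        refine mem_cellOf.mpr ⟨?_, ?_⟩
        · show B p.1 < y.2
          have hBle := hBanti y.1 p.1 hy1 h1.le
          have := hyc.1
          omega
        · show y.2 ≤ A p.1
          have := hpc.2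
          omega
      have ha := hss.2 y.1 p.1 y.2 (by rw [heta]; exact hy) hmid h1
      have hb := hss.1 p.1 y.2 p.2 hmid (by rw [heta]; exact hp) h2
      rw [heta y] at ha
      rw [heta p] at hb
      omega
    have hprop1 : ∀ p ∈ cellOf A B, ∀ q ∈ cellOf A B, leNW p q → leSW (g p) (g q) := by
      intro p hp q hq hnw
      obtain ⟨a, ha1, han, hTpa⟩ := hex p hp
      obtain ⟨b, hb1, hbn, hTpb⟩ := hex q hq
      have habl : a ≤ b := by
        have := hab p hp q hq hnw
        omega
      have hgp := hgp' p hp a hTpa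
      have hgq := hgp' q hq b hTpb
      set j := occBefore A B Tp (m + a) p with hjdef
      set j' := occBefore A B Tp (m + b) q with hjdef'
      rw [hgp, hgq]
      refine ⟨habl, ?_⟩
      show W b + j' ≤ W a + j
      by_contra hc
      push_neg at hc
      have hgpN : (a, W a + j) ∈ cellOf ν W := by rw [← hgp]; exact hmaps p hp
      have hgqN : (b, W b + j') ∈ cellOf ν W := by rw [← hgq]; exact hmaps q hq
      have hj1 : 1 ≤ j := hocc1 p hp a hTpa
      have hacN : (a, W b + j') ∈ cellOf ν W := by
        refine mem_cellOf.mpr ⟨?_, ?_⟩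
        · show W a < W b + j'
          omega
        · show W b + j' ≤ ν a
          have h1 : W b + j' ≤ ν b := hgqN.2
          have h2 := hνmono a b ha1 habl
          omega
      obtain ⟨x, hx, hTx, hgx⟩ := hcell_g a (W b + j') hacN
      have e1 : Tm (a, W b + j') = x.2 := by rw [← hgx]; exact hTmg x hx
      have e2 : Tm (b, W b + j') = q.2 := by rw [← hgq]; exact hTmg q hq
      have e3 : Tm (a, W a + j) = p.2 := by rw [← hgp]; exact hTmg p hp
      have hrowlt := hanti.1 a (W a + j) (W b + j') hgpN hacN (by omega)
      have hcolle := hanti.2 a b (W b + j') hacN hgqN habl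
      rw [e1, e3] at hrowlt
      rw [e1, e2] at hcolle
      have := hnw.2
      omega
    have hprop2 : ∀ p ∈ cellOf A B, ∀ q ∈ cellOf A B, leNW (g p) (g q) → leSW p q := by
      intro p hp q hq hnw
      obtain ⟨a, ha1, han, hTpa⟩ := hex p hp
      obtain ⟨b, hb1, hbn, hTpb⟩ := hex q hq
      have hgp := hgp' p hp a hTpa
      have hgq := hgp' q hq b hTpb
      rw [hgp, hgq] at hnw
      have hnw1 : a ≤ b := hnw.1
      have hnw2 : W a + occBefore A B Tp (m + a) p
          ≤ W b + occBefore A B Tp (m + b) q := hnw.2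
      set j := occBefore A B Tp (m + a) p with hjdef
      set j' := occBefore A B Tp (m + b) q with hjdef'
      have hgpN : (a, W a + j) ∈ cellOf ν W := by rw [← hgp]; exact hmaps p hp
      have hgqN : (b, W b + j') ∈ cellOf ν W := by rw [← hgq]; exact hmaps q hq
      by_cases hab' : a = b
      · subst hab'
        have hjj : j ≤ j' := by omega
        by_cases hje : j = j'
        · have he : g p = g q := by rw [hgp, hgq, hje]
          have hpq := hinj hp hq he
          rw [hpq]
          exact ⟨le_rfl, le_rfl⟩
        · have hjlt : j < j' := by omega
          have hwpq : wle p q := by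
            apply wle_of_occBefore_le hfinA hp hq hTpa
            exact hjlt.le
          refine ⟨?_, ?_⟩
          · rcases hwpq with h | ⟨h, -⟩
            · exact h.le
            · exact h.le
          · have h := hanti.1 a (W a + j) (W a + j') hgpN hgqN (by omega)
            have e3 : Tm (a, W a + j) = p.2 := by rw [← hgp]; exact hTmg p hp
            have e2 : Tm (a, W a + j') = q.2 := by rw [← hgq]; exact hTmg q hq
            rw [e2, e3] at h
            exact h.le
      · have habl : a < b := by omega
        have hj1 : 1 ≤ j := hocc1 p hp a hTpa
        have hWba : W b ≤ W a := hWanti a b ha1 habl.le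
        have hbcN : (b, W a + j) ∈ cellOf ν W := by
          refine mem_cellOf.mpr ⟨?_, ?_⟩
          · show W b < W a + j
            omega
          · show W a + j ≤ ν b
            have hq2 : W b + j' ≤ ν b := hgqN.2
            omega
        obtain ⟨y, hy, hTy, hgy⟩ := hcell_g b (W a + j) hbcN
        have e1 : Tm (b, W a + j) = y.2 := by rw [← hgy]; exact hTmg y hy
        have e2 : Tm (a, W a + j) = p.2 := by rw [← hgp]; exact hTmg p hp
        have e3 : Tm (b, W b + j') = q.2 := by rw [← hgq]; exact hTmg q hq
        have hcol : Tm (b, W a + j) ≤ Tm (a, W a + j) :=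
          hanti.2 a b (W a + j) hgpN hbcN habl.le
        have hrow : Tm (b, W b + j') ≤ Tm (b, W a + j) := by
          rcases eq_or_lt_of_le hnw2 with he | hlt
          · exact le_of_eq (by rw [he])
          · exact (hanti.1 b (W a + j) (W b + j') hbcN hgqN hlt).le
        rw [e1, e2] at hcol
        rw [e3, e1] at hrow
        have hgy2 : g y = (b, W b + occBefore A B Tp (m + b) y) := hgp' y hy b hTy
        have hoccy : W b + occBefore A B Tp (m + b) y = W a + j := by
          have hcomp : (b, W b + occBefore A B Tp (m + b) y) = ((b : ℕ), W a + j) := by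
            rw [← hgy2, hgy]
          have : W b + occBefore A B Tp (m + b) y = (((b : ℕ), W a + j) : ℕ × ℕ).2 :=
            congrArg Prod.snd hcomp
          exact this
        have hyle : occBefore A B Tp (m + b) y ≤ j' := by omega
        have hyq : wle y q := by
          apply wle_of_occBefore_le hfinA hy hq hTy
          exact hyle
        have hyq1 : y.1 ≤ q.1 := by
          rcases hyq with h | ⟨h, -⟩
          · exact h.le
          · exact h.le
        have hpy : p.1 ≤ y.1 := by
          by_contra hcon
          push_neg at hcon
          have := hNE p hp y hy hcon (by omega)
          omega
        exact ⟨by omega, by omega⟩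
    refine ⟨⟨⟨fun p hp => hmaps p hp, hinj, hsurj⟩, hprop1, hprop2⟩, ?_⟩
    intro p hp
    obtain ⟨i, hi1, hin, hTp⟩ := hex p hp
    rw [hgp' p hp i hTp]
    show m + i = Tp p
    omega
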